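/- Let r < n, let α, β ∈ S_n be permutations fixing every point in {r+1,...,n}, and let α₁, β₁ ∈ S_n fix every point in {1,...,r}. Then the number of conjugacy classes of S_n meeting the product (restriction of α to S_r)^{S_r} · (restriction of β)^{S_r} is at most the number of conjugacy classes of S_n meeting (αα₁)^{S_n} · (ββ₁)^{S_n}. -/

import Mathlib

/-- The conjugacy class of `a` in `G`. -/
def conjClass {G : Type*} [Group G] (a : G) : Set G := {x | IsConj a x}

/-- The product of two subsets of a group. -/
def setProd {G : Type*} [Group G] (C D : Set G) : Set G := {z | ∃ c ∈ C, ∃ d ∈ D, z = c * d}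

/-- The number of conjugacy classes meeting a set `X`. -/
noncomputable def eta {G : Type*} [Group G] (X : Set G) : ℕ :=
  Nat.card {c : ConjClasses G // (c.carrier ∩ X).Nonempty}


/-- Conjugacy class of `a` under conjugation by the copy of `S_r` inside `S_n`, i.e.
by permutations fixing every point of index `≥ r`. -/
def subClass (n r : ℕ) (a : Equiv.Perm (Fin n)) : Set (Equiv.Perm (Fin n)) :=
  {x | ∃ σ : Equiv.Perm (Fin n), (∀ i : Fin n, r ≤ (i : ℕ) → σ i = i) ∧ x = σ⁻¹ * a * σ}

lemma fix_ge_inv {n r : ℕ} {σ : Equiv.Perm (Fin n)}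
    (h : ∀ i : Fin n, r ≤ (i : ℕ) → σ i = i) :
    ∀ i : Fin n, r ≤ (i : ℕ) → σ⁻¹ i = i := by
  intro i hi
  nth_rewrite 1 [← h i hi]
  simp

lemma fix_ge_mul {n r : ℕ} {σ τ : Equiv.Perm (Fin n)}
    (hσ : ∀ i : Fin n, r ≤ (i : ℕ) → σ i = i)
    (hτ : ∀ i : Fin n, r ≤ (i : ℕ) → τ i = i) :
    ∀ i : Fin n, r ≤ (i : ℕ) → (σ * τ) i = i := by
  intro i hi
  simp [Equiv.Perm.mul_apply, hτ i hi, hσ i hi]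

lemma disj_of_fix {n r : ℕ} {x g : Equiv.Perm (Fin n)}
    (hx : ∀ i : Fin n, r ≤ (i : ℕ) → x i = i)
    (hg : ∀ i : Fin n, (i : ℕ) < r → g i = i) : x.Disjoint g := by
  intro i
  rcases lt_or_ge (i : ℕ) r with h | h
  · exact Or.inr (hg i h)
  · exact Or.inl (hx i h)

lemma fix_ge_conj {n r : ℕ} {a σ : Equiv.Perm (Fin n)}
    (ha : ∀ i : Fin n, r ≤ (i : ℕ) → a i = i)
    (hσ : ∀ i : Fin n, r ≤ (i : ℕ) → σ i = i) :
    ∀ i : Fin n, r ≤ (i : ℕ) → (σ⁻¹ * a * σ) i = i := by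
  intro i hi
  simp [Equiv.Perm.mul_apply, hσ i hi, ha i hi, fix_ge_inv hσ i hi]

lemma subClass_fix {n r : ℕ} {a x : Equiv.Perm (Fin n)}
    (ha : ∀ i : Fin n, r ≤ (i : ℕ) → a i = i)
    (hx : x ∈ subClass n r a) :
    ∀ i : Fin n, r ≤ (i : ℕ) → x i = i := by
  obtain ⟨σ, hσ, rfl⟩ := hx
  exact fix_ge_conj ha hσ

theorem stmt5 (n r : ℕ) (hr : r < n) (α β α₁ β₁ : Equiv.Perm (Fin n))
    (hα : ∀ i : Fin n, r ≤ (i : ℕ) → α i = i)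
    (hβ : ∀ i : Fin n, r ≤ (i : ℕ) → β i = i)
    (hα₁ : ∀ i : Fin n, (i : ℕ) < r → α₁ i = i)
    (hβ₁ : ∀ i : Fin n, (i : ℕ) < r → β₁ i = i) :
    eta (setProd (subClass n r α) (subClass n r β)) ≤
      eta (setProd (conjClass (α * α₁)) (conjClass (β * β₁))) := by
  classical
  set A := setProd (subClass n r α) (subClass n r β) with hA
  set B := setProd (conjClass (α * α₁)) (conjClass (β * β₁)) with hB
  set g : Equiv.Perm (Fin n) := α₁ * β₁ with hg
  have hgfix : ∀ i : Fin n, (i : ℕ) < r → g i = i := by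
    intro i hi; simp [hg, Equiv.Perm.mul_apply, hβ₁ i hi, hα₁ i hi]
  -- every element of A fixes indices ≥ r
  have hAfix : ∀ x ∈ A, ∀ i : Fin n, r ≤ (i : ℕ) → x i = i := by
    rintro x ⟨c, hc, d, hd, rfl⟩
    exact fix_ge_mul (subClass_fix hα hc) (subClass_fix hβ hd)
  -- x ∈ A implies x * g ∈ B
  have hmemB : ∀ x ∈ A, x * g ∈ B := by
    rintro x ⟨c, ⟨s, hs, rfl⟩, d, ⟨t, ht, rfl⟩, rfl⟩
    refine ⟨s⁻¹ * (α * α₁) * s, ?_, t⁻¹ * (β * β₁) * t, ?_, ?_⟩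
    · exact isConj_iff.mpr ⟨s⁻¹, by group⟩
    · exact isConj_iff.mpr ⟨t⁻¹, by group⟩
    · have e1 : α₁ * s = s * α₁ := ((disj_of_fix hs hα₁).commute.eq).symm
      have e2 : β₁ * t = t * β₁ := ((disj_of_fix ht hβ₁).commute.eq).symm
      have e3 : α₁ * (t⁻¹ * β * t) = (t⁻¹ * β * t) * α₁ :=
        ((disj_of_fix (fix_ge_conj hβ ht) hα₁).commute.eq).symm
      have h1 : s⁻¹ * (α * α₁) * s = (s⁻¹ * α * s) * α₁ := by
        rw [show s⁻¹ * (α * α₁) * s = s⁻¹ * α * (α₁ * s) by group, e1]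
        group
      have h2 : t⁻¹ * (β * β₁) * t = (t⁻¹ * β * t) * β₁ := by
        rw [show t⁻¹ * (β * β₁) * t = t⁻¹ * β * (β₁ * t) by group, e2]
        group
      rw [h1, h2, hg]
      calc (s⁻¹ * α * s) * (t⁻¹ * β * t) * (α₁ * β₁)
          = (s⁻¹ * α * s) * ((t⁻¹ * β * t) * α₁) * β₁ := by group
        _ = (s⁻¹ * α * s) * (α₁ * (t⁻¹ * β * t)) * β₁ := by rw [e3]
        _ = (s⁻¹ * α * s) * α₁ * ((t⁻¹ * β * t) * β₁) := by group
  -- the injection on conjugacy classes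
  have key : ∀ x ∈ A, ∀ y ∈ A, IsConj (x * g) (y * g) → IsConj x y := by
    intro x hx y hy h
    have dx : x.Disjoint g := disj_of_fix (hAfix x hx) hgfix
    have dy : y.Disjoint g := disj_of_fix (hAfix y hy) hgfix
    rw [Equiv.Perm.isConj_iff_cycleType_eq] at h ⊢
    rw [Equiv.Perm.Disjoint.cycleType_mul dx, Equiv.Perm.Disjoint.cycleType_mul dy] at h
    exact add_right_cancel h
  let f : {c : ConjClasses (Equiv.Perm (Fin n)) // (c.carrier ∩ A).Nonempty} →
      {c : ConjClasses (Equiv.Perm (Fin n)) // (c.carrier ∩ B).Nonempty} := fun c =>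
    ⟨ConjClasses.mk (c.2.choose * g), ⟨c.2.choose * g,
      by rw [ConjClasses.mem_carrier_iff_mk_eq], hmemB _ c.2.choose_spec.2⟩⟩
  have hf : Function.Injective f := by
    intro c c' hcc
    have h1 := c.2.choose_spec
    have h2 := c'.2.choose_spec
    have : ConjClasses.mk (c.2.choose * g) = ConjClasses.mk (c'.2.choose * g) := by
      simpa [f] using congrArg Subtype.val hcc
    rw [ConjClasses.mk_eq_mk_iff_isConj] at this
    have := key _ h1.2 _ h2.2 this
    rw [← ConjClasses.mk_eq_mk_iff_isConj] at this
    apply Subtype.ext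
    rw [← ConjClasses.mem_carrier_iff_mk_eq.mp h1.1, ← ConjClasses.mem_carrier_iff_mk_eq.mp h2.1,
      this]
  exact Nat.card_le_card_of_injective f hf
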